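/- Let Ω be a finite probability space, let G : Ω → 𝒢 (the joint of all views), Y : Ω → 𝒴, and let Z = f ∘ G for a function f : 𝒢 → 𝒵, with 𝒢, 𝒴, 𝒵 finite types. If Y and G are conditionally independent given Z, then I(Z;Y) = I(G;Y), i.e. the representation Z is sufficient: its mutual information with the labels equals that of all views combined. -/
import Mathlib


open scoped Classical

/-- Probability of an event `E` on a finite probability space with weights `p`. -/
noncomputable def Pr {Ω : Type*} [Fintype Ω] (p : Ω → ℝ) (E : Ω → Prop) : ℝ :=
  ∑ ω, if E ω then p ω else 0

/-- Mutual information `I(X;Y)` of random variables on a finite probability space.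
Summands with zero joint probability are automatically `0` since the factor vanishes. -/
noncomputable def MI {Ω 𝒳 𝒴 : Type*} [Fintype Ω] [Fintype 𝒳] [Fintype 𝒴]
    (p : Ω → ℝ) (X : Ω → 𝒳) (Y : Ω → 𝒴) : ℝ :=
  ∑ x : 𝒳, ∑ y : 𝒴,
    Pr p (fun ω => X ω = x ∧ Y ω = y) *
      Real.log (Pr p (fun ω => X ω = x ∧ Y ω = y) /
        (Pr p (fun ω => X ω = x) * Pr p (fun ω => Y ω = y)))

/-- Conditional mutual information `I(X;Y|Z)` on a finite probability space. -/
noncomputable def CMI {Ω 𝒳 𝒴 𝒵 : Type*} [Fintype Ω] [Fintype 𝒳] [Fintype 𝒴] [Fintype 𝒵]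
    (p : Ω → ℝ) (X : Ω → 𝒳) (Y : Ω → 𝒴) (Z : Ω → 𝒵) : ℝ :=
  ∑ x : 𝒳, ∑ y : 𝒴, ∑ z : 𝒵,
    Pr p (fun ω => X ω = x ∧ Y ω = y ∧ Z ω = z) *
      Real.log ((Pr p (fun ω => Z ω = z) *
          Pr p (fun ω => X ω = x ∧ Y ω = y ∧ Z ω = z)) /
        (Pr p (fun ω => X ω = x ∧ Z ω = z) * Pr p (fun ω => Y ω = y ∧ Z ω = z)))

/-- `X` and `Y` are conditionally independent given `Z`. -/
def CondIndep {Ω 𝒳 𝒴 𝒵 : Type*} [Fintype Ω]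
    (p : Ω → ℝ) (X : Ω → 𝒳) (Y : Ω → 𝒴) (Z : Ω → 𝒵) : Prop :=
  ∀ x y z,
    Pr p (fun ω => Z ω = z) * Pr p (fun ω => X ω = x ∧ Y ω = y ∧ Z ω = z) =
      Pr p (fun ω => X ω = x ∧ Z ω = z) * Pr p (fun ω => Y ω = y ∧ Z ω = z)

/-- If `Y` and `G` are conditionally independent given `Z = f ∘ G`, then the representation
`Z` is sufficient: `I(Z;Y) = I(G;Y)`. -/

lemma Pr_nonneg {Ω : Type*} [Fintype Ω] {p : Ω → ℝ} (hp : ∀ ω, 0 ≤ p ω) (E : Ω → Prop) :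
    0 ≤ Pr p E := by
  apply Finset.sum_nonneg; intro ω _; split <;> simp [hp ω]

lemma Pr_mono {Ω : Type*} [Fintype Ω] {p : Ω → ℝ} (hp : ∀ ω, 0 ≤ p ω) {E F : Ω → Prop}
    (h : ∀ ω, E ω → F ω) : Pr p E ≤ Pr p F := by
  apply Finset.sum_le_sum; intro ω _
  by_cases hE : E ω
  · simp [hE, h ω hE]
  · simp only [hE, if_false]; split <;> simp [hp ω]

lemma Pr_congr {Ω : Type*} [Fintype Ω] {p : Ω → ℝ} {E F : Ω → Prop}
    (h : ∀ ω, E ω ↔ F ω) : Pr p E = Pr p F := by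
  unfold Pr; apply Finset.sum_congr rfl; intro ω _; simp [h ω]

lemma Pr_fiber {Ω 𝒢 𝒴 𝒵 : Type*} [Fintype Ω] [Fintype 𝒢] (p : Ω → ℝ)
    (G : Ω → 𝒢) (Y : Ω → 𝒴) (f : 𝒢 → 𝒵) (z : 𝒵) (y : 𝒴) :
    Pr p (fun ω => f (G ω) = z ∧ Y ω = y) =
      ∑ g : 𝒢, if f g = z then Pr p (fun ω => G ω = g ∧ Y ω = y) else 0 := by
  have key : ∀ g : 𝒢, (if f g = z then Pr p (fun ω => G ω = g ∧ Y ω = y) else 0) =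
      ∑ ω, if G ω = g ∧ f (G ω) = z ∧ Y ω = y then p ω else 0 := by
    intro g
    by_cases h : f g = z
    · simp only [h, if_true, Pr]
      apply Finset.sum_congr rfl; intro ω _
      by_cases hG : G ω = g
      · simp [hG, h]
      · simp [hG]
    · simp only [h, if_false]
      symm; apply Finset.sum_eq_zero; intro ω _
      by_cases hG : G ω = g
      · simp [hG, h]
      · simp [hG]
  rw [Finset.sum_congr rfl (fun g _ => key g), Finset.sum_comm]
  unfold Pr
  apply Finset.sum_congr rfl; intro ω _
  by_cases hC : f (G ω) = z ∧ Y ω = y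
  · rw [if_pos hC]
    rw [Finset.sum_eq_single (G ω)]
    · simp [hC]
    · intro g _ hg; simp [Ne.symm hg]
    · simp
  · rw [if_neg hC]
    symm; apply Finset.sum_eq_zero; intro g _
    by_cases hG : G ω = g
    · subst hG; simp [hC]
    · simp [hG]

theorem representation_sufficiency
    {Ω 𝒢 𝒴 𝒵 : Type*} [Fintype Ω] [Fintype 𝒢] [Fintype 𝒴] [Fintype 𝒵]
    (p : Ω → ℝ) (hp : ∀ ω, 0 ≤ p ω) (hp1 : ∑ ω, p ω = 1)
    (G : Ω → 𝒢) (Y : Ω → 𝒴) (f : 𝒢 → 𝒵)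
    (hCI : CondIndep p Y G (fun ω => f (G ω))) :
    MI p (fun ω => f (G ω)) Y = MI p G Y := by
  unfold MI
  -- abbreviations
  set PY : 𝒴 → ℝ := fun y => Pr p (fun ω => Y ω = y) with hPY
  set PG : 𝒢 → ℝ := fun g => Pr p (fun ω => G ω = g) with hPG
  set PZ : 𝒵 → ℝ := fun z => Pr p (fun ω => f (G ω) = z) with hPZ
  set A : 𝒢 → 𝒴 → ℝ := fun g y => Pr p (fun ω => G ω = g ∧ Y ω = y) with hA
  set B : 𝒵 → 𝒴 → ℝ := fun z y => Pr p (fun ω => f (G ω) = z ∧ Y ω = y) with hB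
  -- key pointwise identity
  have key : ∀ g y, A g y ≠ 0 →
      Real.log (B (f g) y / (PZ (f g) * PY y)) =
      Real.log (A g y / (PG g * PY y)) := by
    intro g y h0
    have hApos : 0 < A g y := lt_of_le_of_ne (Pr_nonneg hp _) (Ne.symm h0)
    have hPGpos : 0 < PG g :=
      lt_of_lt_of_le hApos (Pr_mono hp (fun ω h => h.1))
    have hPYpos : 0 < PY y :=
      lt_of_lt_of_le hApos (Pr_mono hp (fun ω h => h.2))
    have hPZpos : 0 < PZ (f g) :=
      lt_of_lt_of_le hPGpos (Pr_mono hp (fun ω h => by rw [h]))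
    have hci := hCI y g (f g)
    have e1 : Pr p (fun ω => Y ω = y ∧ G ω = g ∧ f (G ω) = f g) = A g y := by
      apply Pr_congr; intro ω; constructor
      · rintro ⟨h1, h2, _⟩; exact ⟨h2, h1⟩
      · rintro ⟨h1, h2⟩; exact ⟨h2, h1, by rw [h1]⟩
    have e2 : Pr p (fun ω => G ω = g ∧ f (G ω) = f g) = PG g := by
      apply Pr_congr; intro ω; constructor
      · rintro ⟨h1, _⟩; exact h1
      · intro h1; exact ⟨h1, by rw [h1]⟩
    have e3 : Pr p (fun ω => Y ω = y ∧ f (G ω) = f g) = B (f g) y := by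
      apply Pr_congr; intro ω; exact and_comm
    rw [e1, e2, e3] at hci
    -- hci : PZ (f g) * A g y = B (f g) y * PG g
    congr 1
    field_simp
    nlinarith [hci]
  have fiber : ∀ z y, B z y = ∑ g : 𝒢, if f g = z then A g y else 0 := by
    intro z y; exact Pr_fiber p G Y f z y
  calc ∑ z : 𝒵, ∑ y : 𝒴, B z y * Real.log (B z y / (PZ z * PY y))
      = ∑ z : 𝒵, ∑ y : 𝒴, ∑ g : 𝒢,
          (if f g = z then A g y * Real.log (B z y / (PZ z * PY y)) else 0) := by
        apply Finset.sum_congr rfl; intro z _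
        apply Finset.sum_congr rfl; intro y _
        rw [fiber z y, Finset.sum_mul]
        apply Finset.sum_congr rfl; intro g _
        split <;> simp
    _ = ∑ g : 𝒢, ∑ y : 𝒴, ∑ z : 𝒵,
          (if f g = z then A g y * Real.log (B z y / (PZ z * PY y)) else 0) := by
        rw [Finset.sum_comm]
        rw [Finset.sum_congr rfl fun y _ => Finset.sum_comm ..]
        rw [Finset.sum_comm]
    _ = ∑ g : 𝒢, ∑ y : 𝒴, A g y * Real.log (B (f g) y / (PZ (f g) * PY y)) := by
        apply Finset.sum_congr rfl; intro g _
        apply Finset.sum_congr rfl; intro y _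
        rw [Finset.sum_eq_single (f g)]
        · simp
        · intro z _ hz; rw [if_neg (Ne.symm hz)]
        · simp
    _ = ∑ g : 𝒢, ∑ y : 𝒴, A g y * Real.log (A g y / (PG g * PY y)) := by
        apply Finset.sum_congr rfl; intro g _
        apply Finset.sum_congr rfl; intro y _
        by_cases h0 : A g y = 0
        · simp [h0]
        · rw [key g y h0]
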